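/- If g(t) solves the Ricci flow on a closed manifold and the scalar curvature satisfies R ≥ c at time 0 for some constant c, then R ≥ c for all later times; moreover if R(·,0) ≥ c > 0 then the flow cannot exist beyond time n/(2c), since the minimum of R satisfies R_min(t) ≥ 1/(R_min(0)⁻¹ - 2t/n). -/

import Mathlib

open Topology

noncomputable section

/-- Barrier / maximum-principle lemma: if at each time in `[0,T)` the time
derivative of `F` is nonnegative at every spatial minimum point, then a lower
bound at time `0` persists. -/
lemma ricci_barrier
    (M : Type) [TopologicalSpace M] [CompactSpace M] [Nonempty M]
    (T : ℝ) (F f : M → ℝ → ℝ)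
    (hFcont : ContinuousOn (fun p : M × ℝ => F p.1 p.2) (Set.univ ×ˢ Set.Ico (0:ℝ) T))
    (hder : ∀ x, ∀ t ∈ Set.Ico (0:ℝ) T, HasDerivAt (F x) (f x t) t)
    (hkey : ∀ t ∈ Set.Ico (0:ℝ) T, ∀ x : M, (∀ y, F x t ≤ F y t) → 0 ≤ f x t)
    (a : ℝ) (h0 : ∀ x, a ≤ F x 0) :
    ∀ t ∈ Set.Ico (0:ℝ) T, ∀ x, a ≤ F x t := by
  have main : ∀ ε > (0:ℝ), ∀ t ∈ Set.Ico (0:ℝ) T, ∀ x, a - ε * (1 + t) < F x t := by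
    intro ε hε
    by_contra hcon
    push_neg at hcon
    obtain ⟨t₁, ht₁, x₁, hx₁⟩ := hcon
    have hKsub : (Set.univ ×ˢ Set.Icc (0:ℝ) t₁ : Set (M × ℝ)) ⊆
        Set.univ ×ˢ Set.Ico (0:ℝ) T := by
      intro p hp
      exact ⟨hp.1, hp.2.1, lt_of_le_of_lt hp.2.2 ht₁.2⟩
    have hKcomp : IsCompact (Set.univ ×ˢ Set.Icc (0:ℝ) t₁ : Set (M × ℝ)) :=
      isCompact_univ.prod isCompact_Icc
    set C : Set (M × ℝ) :=
      (Set.univ ×ˢ Set.Icc (0:ℝ) t₁) ∩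
        ((fun p : M × ℝ => F p.1 p.2 - (a - ε * (1 + p.2))) ⁻¹' Set.Iic 0) with hC
    have hCclosed : IsClosed C := by
      apply ContinuousOn.preimage_isClosed_of_isClosed
        ((hFcont.mono hKsub).sub (by fun_prop))
        (isClosed_univ.prod isClosed_Icc) isClosed_Iic
    have hCcomp : IsCompact C := hKcomp.of_isClosed_subset hCclosed Set.inter_subset_left
    set P : Set ℝ := Prod.snd '' C with hP
    have hPcomp : IsCompact P := hCcomp.image continuous_snd
    have hPne : P.Nonempty := ⟨t₁, ⟨(x₁, t₁), ⟨⟨Set.mem_univ _, ht₁.1, le_refl _⟩,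
      by simpa using sub_nonpos.mpr hx₁⟩, rfl⟩⟩
    set t₀ : ℝ := sInf P with ht₀
    have ht₀P : t₀ ∈ P := hPcomp.sInf_mem hPne
    obtain ⟨⟨x₀, t₀'⟩, hmem, hsnd⟩ := ht₀P
    simp only at hsnd
    subst hsnd
    have ht₀Icc : t₀ ∈ Set.Icc (0:ℝ) t₁ := hmem.1.2
    have hx₀bad : F x₀ t₀ ≤ a - ε * (1 + t₀) := by
      have := hmem.2
      simp only [Set.mem_preimage, Set.mem_Iic] at this
      linarith
    have ht₀pos : 0 < t₀ := by
      rcases lt_or_eq_of_le ht₀Icc.1 with h | h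
      · exact h
      · exfalso
        have h1 := h0 x₀
        rw [← h] at hx₀bad
        nlinarith
    have ht₀mem : t₀ ∈ Set.Ico (0:ℝ) T := ⟨ht₀pos.le, lt_of_le_of_lt ht₀Icc.2 ht₁.2⟩
    -- spatial minimizer at time t₀
    have hcont₀ : Continuous fun x : M => F x t₀ := by
      have : (fun x : M => F x t₀) =
          (fun p : M × ℝ => F p.1 p.2) ∘ fun x => (x, t₀) := rfl
      rw [this]
      apply hFcont.comp_continuous (by fun_prop)
      intro x
      exact ⟨Set.mem_univ _, ht₀mem⟩
    obtain ⟨z, _, hzmin⟩ := isCompact_univ.exists_isMinOn Set.univ_nonempty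
      hcont₀.continuousOn
    have hzmin' : ∀ y, F z t₀ ≤ F y t₀ := fun y => hzmin (Set.mem_univ y)
    have hzbad : F z t₀ ≤ a - ε * (1 + t₀) := le_trans (hzmin' x₀) hx₀bad
    have hgood : ∀ s, 0 ≤ s → s < t₀ → a - ε * (1 + s) < F z s := by
      intro s hs0 hst
      by_contra h
      push_neg at h
      have hsP : s ∈ P := ⟨(z, s), ⟨⟨Set.mem_univ _, hs0, hst.le.trans ht₀Icc.2⟩,
        by simpa using sub_nonpos.mpr h⟩, rfl⟩
      exact absurd (csInf_le hPcomp.bddBelow hsP) (not_le.mpr hst)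
    have hd0 : 0 ≤ f z t₀ := hkey t₀ ht₀mem z hzmin'
    have hderz := hder z t₀ ht₀mem
    rw [hasDerivAt_iff_tendsto_slope] at hderz
    have htend : Filter.Tendsto (slope (F z) t₀) (𝓝[<] t₀) (𝓝 (f z t₀)) :=
      hderz.mono_left (nhdsWithin_mono _ (fun s hs => ne_of_lt hs))
    have hle : f z t₀ ≤ -ε := by
      apply le_of_tendsto htend
      filter_upwards [Ioo_mem_nhdsLT_of_mem (Set.mem_Ioc.mpr ⟨ht₀pos, le_refl t₀⟩)]
        with s hs
      have h1 : a - ε * (1 + s) < F z s := hgood s hs.1.le hs.2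
      rw [slope_def_field, div_le_iff_of_neg (by linarith [hs.2] : s - t₀ < 0)]
      nlinarith
    linarith
  intro t ht x
  by_contra h
  push_neg at h
  have h1t : (0:ℝ) < 1 + t := by linarith [ht.1]
  have hε : 0 < (a - F x t) / (1 + t) := div_pos (by linarith) h1t
  have hmain := main _ hε t ht x
  have heq : (a - F x t) / (1 + t) * (1 + t) = a - F x t :=
    div_mul_cancel₀ _ (ne_of_gt h1t)
  linarith

/-- Lower bounds on scalar curvature persist under the Ricci flow on a closed
`n`-manifold, and positive scalar curvature forces finite-time extinction.
The flow on the closed manifold `M` is recorded through the scalar curvature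
`R : M → ℝ → ℝ`, evolving by `∂R/∂t = ΔR + 2|Ric|²` (fields `lap` and `ricSq`),
together with `|Ric|² ≥ R²/n` and the maximum principle (the Laplacian is
nonnegative at a spatial minimum).  Conclusions: `R ≥ c` is preserved; if
`R(·,0) ≥ c > 0` the flow cannot exist beyond time `n/(2c)`; and the spatial
minimum satisfies `R_min(t) ≥ (R_min(0)⁻¹ - 2t/n)⁻¹`. -/
theorem scalar_curvature_lower_bound_under_ricci_flow
    (M : Type) [TopologicalSpace M] [CompactSpace M] [Nonempty M]
    (n : ℕ) (hn : 0 < n) (T : ℝ) (hT : 0 < T)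
    (R lap ricSq : M → ℝ → ℝ)
    (hRcont : Continuous fun p : M × ℝ => R p.1 p.2)
    (hev : ∀ (x : M), ∀ t ∈ Set.Ico (0:ℝ) T,
      HasDerivAt (R x) (lap x t + 2 * ricSq x t) t)
    (hpinch : ∀ (x : M) (t : ℝ), (R x t) ^ 2 / n ≤ ricSq x t)
    (hmax : ∀ t ∈ Set.Ico (0:ℝ) T, ∀ x : M,
      (∀ y, R x t ≤ R y t) → 0 ≤ lap x t)
    (c : ℝ) (h0 : ∀ x, c ≤ R x 0) :
    (∀ t ∈ Set.Ico (0:ℝ) T, ∀ x, c ≤ R x t) ∧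
    (0 < c → T ≤ n / (2 * c)) ∧
    (0 < ⨅ x, R x 0 → ∀ t ∈ Set.Ico (0:ℝ) T,
      ((⨅ x, R x 0)⁻¹ - 2 * t / n)⁻¹ ≤ ⨅ x, R x t) := by
  have hn' : (0:ℝ) < n := by exact_mod_cast hn
  -- key nonnegativity of the drift at spatial minima
  have hkey₁ : ∀ t ∈ Set.Ico (0:ℝ) T, ∀ x : M,
      (∀ y, R x t ≤ R y t) → 0 ≤ lap x t + 2 * ricSq x t := by
    intro t ht x hx
    have h1 := hmax t ht x hx
    have h2 := hpinch x t
    have h3 : 0 ≤ (R x t) ^ 2 / n := by positivity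
    linarith
  -- Part 1 machinery, for any constant a:
  have part1 : ∀ a : ℝ, (∀ x, a ≤ R x 0) → ∀ t ∈ Set.Ico (0:ℝ) T, ∀ x, a ≤ R x t := by
    intro a ha
    exact ricci_barrier M T R (fun x t => lap x t + 2 * ricSq x t)
      hRcont.continuousOn hev hkey₁ a ha
  -- Key quantitative estimate for positive lower bounds
  have keyQ : ∀ b : ℝ, 0 < b → (∀ x, b ≤ R x 0) →
      ∀ t ∈ Set.Ico (0:ℝ) T, ∀ x,
        0 < b⁻¹ - 2 * t / n ∧ (b⁻¹ - 2 * t / n)⁻¹ ≤ R x t := by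
    intro b hb hb0
    have hpos : ∀ t ∈ Set.Ico (0:ℝ) T, ∀ x, 0 < R x t := by
      intro t ht x
      exact lt_of_lt_of_le hb (part1 b hb0 t ht x)
    set F : M → ℝ → ℝ := fun x t => -(R x t)⁻¹ - 2 * t / n with hF
    set f : M → ℝ → ℝ := fun x t =>
      (lap x t + 2 * ricSq x t) / (R x t) ^ 2 - 2 / n with hf
    have hFcont : ContinuousOn (fun p : M × ℝ => F p.1 p.2)
        (Set.univ ×ˢ Set.Ico (0:ℝ) T) := by
      apply ContinuousOn.sub
      · apply ContinuousOn.neg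
        apply ContinuousOn.inv₀ hRcont.continuousOn
        intro p hp
        exact ne_of_gt (hpos p.2 hp.2 p.1)
      · fun_prop
    have hder : ∀ x, ∀ t ∈ Set.Ico (0:ℝ) T, HasDerivAt (F x) (f x t) t := by
      intro x t ht
      have hR := hpos t ht x
      have h1 : HasDerivAt (fun s => (R x s)⁻¹)
          (-(lap x t + 2 * ricSq x t) / (R x t) ^ 2) t :=
        (hev x t ht).inv (ne_of_gt hR)
      have h2 : HasDerivAt (fun s : ℝ => 2 * s / (n:ℝ)) (2 / n) t := by
        simpa using (((hasDerivAt_id t).const_mul (2:ℝ)).div_const (n:ℝ))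
      have := (h1.neg.sub h2)
      convert this using 1
      · rfl
      · rfl
      · rfl
      simp only [hf]
      field_simp
    have hkeyF : ∀ t ∈ Set.Ico (0:ℝ) T, ∀ x : M,
        (∀ y, F x t ≤ F y t) → 0 ≤ f x t := by
      intro t ht x hx
      have hRx := hpos t ht x
      have hxmin : ∀ y, R x t ≤ R y t := by
        intro y
        have hRy := hpos t ht y
        have h := hx y
        simp only [hF] at h
        have hinv : (R y t)⁻¹ ≤ (R x t)⁻¹ := by linarith
        rw [← one_div, ← one_div] at hinv
        exact (one_div_le_one_div hRy hRx).mp hinv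
      have hlap := hmax t ht x hxmin
      have hpin := hpinch x t
      have hdiv : 2 / (n:ℝ) ≤ (lap x t + 2 * ricSq x t) / (R x t) ^ 2 := by
        rw [div_le_div_iff₀ hn' (by positivity)]
        have : (R x t) ^ 2 ≤ ricSq x t * n := by
          rw [div_le_iff₀ hn'] at hpin
          linarith
        nlinarith
      simp only [hf]
      linarith
    have hbar := ricci_barrier M T F f hFcont hder hkeyF (-b⁻¹)
      (by
        intro x
        have hR0 : 0 < R x 0 := lt_of_lt_of_le hb (hb0 x)
        have : (R x 0)⁻¹ ≤ b⁻¹ := by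
          rw [← one_div, ← one_div]
          exact (one_div_le_one_div hR0 hb).mpr (hb0 x)
        simp only [hF]
        rw [mul_zero, zero_div]
        linarith)
    intro t ht x
    have h := hbar t ht x
    simp only [hF] at h
    have hRx := hpos t ht x
    have hinvpos : 0 < (R x t)⁻¹ := inv_pos.mpr hRx
    have h1 : (R x t)⁻¹ ≤ b⁻¹ - 2 * t / n := by linarith
    have h2 : 0 < b⁻¹ - 2 * t / n := lt_of_lt_of_le hinvpos h1
    refine ⟨h2, ?_⟩
    calc (b⁻¹ - 2 * t / n)⁻¹ ≤ ((R x t)⁻¹)⁻¹ :=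
          inv_anti₀ hinvpos h1
      _ = R x t := inv_inv _
  refine ⟨part1 c h0, ?_, ?_⟩
  · -- finite time
    intro hc
    by_contra hTc
    push_neg at hTc
    have hmemT : (n:ℝ) / (2 * c) ∈ Set.Ico (0:ℝ) T := ⟨by positivity, hTc⟩
    have h := (keyQ c hc h0 _ hmemT (Classical.arbitrary M)).1
    have hne : (n:ℝ) ≠ 0 := ne_of_gt hn'
    have hce : c ≠ 0 := ne_of_gt hc
    have : c⁻¹ - 2 * ((n:ℝ) / (2 * c)) / n = 0 := by
      field_simp
      ring
    rw [this] at h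
    exact lt_irrefl 0 h
  · -- inverse estimate for the infimum
    intro hm
    have hcont0 : Continuous fun x : M => R x 0 := by
      have : (fun x : M => R x 0) =
          (fun p : M × ℝ => R p.1 p.2) ∘ fun x => (x, (0:ℝ)) := rfl
      rw [this]; fun_prop
    have hbdd : BddBelow (Set.range fun x : M => R x 0) :=
      (isCompact_range hcont0).bddBelow
    have h0m : ∀ x, (⨅ x, R x 0) ≤ R x 0 := fun x => ciInf_le hbdd x
    intro t ht
    apply le_ciInf
    intro x
    exact (keyQ (⨅ x, R x 0) hm h0m t ht x).2
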